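/- For every subset I ⊆ S and every word b on S, one has pr(b) = pr(π̂_I(b)) · t_I(pr(b)) in W, where pr(π̂_I(b)) ∈ W_I is the product in W of the letters of the word π̂_I(b). -/

import Mathlib

open scoped Classical

namespace DGM

variable {S : Type*} {W : Type*} [Group W] {M : CoxeterMatrix S}

/-- The standard parabolic subgroup `W_I` of `W`, generated by the simple
reflections indexed by `I ⊆ S`. -/
def WP (cs : CoxeterSystem M W) (I : Set S) : Subgroup W :=
  Subgroup.closure (cs.simple '' I)

/-- `w` is `I`-reduced: `ℓ(sw) > ℓ(w)` for every `s ∈ I`. -/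
def IsLeftReduced (cs : CoxeterSystem M W) (I : Set S) (w : W) : Prop :=
  ∀ s ∈ I, cs.length w < cs.length (cs.simple s * w)

/-- `t_I(w)`: the unique element of minimal length of the coset `W_I w`. -/
noncomputable def tP (cs : CoxeterSystem M W) (I : Set S) (w : W) : W :=
  Classical.epsilon (fun v =>
    (∃ u ∈ WP cs I, v = u * w) ∧
      ∀ v', (∃ u ∈ WP cs I, v' = u * w) → cs.length v ≤ cs.length v')

/-- `pr` of a word on `S × {±1}` : the product in `W` of its letters. -/
def prW (cs : CoxeterSystem M W) (b : List (S × Bool)) : W :=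
  cs.wordProd (b.map Prod.fst)

/-- Auxiliary function for the retraction; the accumulator `w` is the image in `W`
of the prefix already read (i.e. `w_{j-1}`).  A letter `(s, ε)` is kept (as the
element `i ∈ I` with `simple i = t_I(w_{j-1}) · s · t_I(w_{j-1})⁻¹`, with the sign `ε`)
exactly when the index is good, i.e. when this conjugate lies in `I`. -/
noncomputable def retrAux (cs : CoxeterSystem M W) (I : Set S) :
    W → List (S × Bool) → List (S × Bool)
  | _, [] => []
  | w, p :: rest =>
    (if h : ∃ i ∈ I, cs.simple i = tP cs I w * cs.simple p.1 * (tP cs I w)⁻¹ then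
        [(h.choose, p.2)]
      else []) ++ retrAux cs I (w * cs.simple p.1) rest

/-- The retraction `π̂_I` of a word on `S × {±1}`; its letters lie in `I × {±1}`. -/
noncomputable def retr (cs : CoxeterSystem M W) (I : Set S) (b : List (S × Bool)) :
    List (S × Bool) :=
  retrAux cs I 1 b


namespace Aux

open CoxeterSystem List

variable (cs : CoxeterSystem M W)

local prefix:100 "s" => cs.simple
local prefix:100 "π" => cs.wordProd
local prefix:100 "ℓ" => cs.length
local prefix:100 "lis" => cs.leftInvSeq
local prefix:100 "ris" => cs.rightInvSeq

/-- The underlying function of the sign permutation attached to a simple index. -/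
noncomputable def pf (i : S) : W × ℤˣ → W × ℤˣ :=
  fun p => (s i * p.1 * s i, if p.1 = s i then -p.2 else p.2)

lemma pf_invol (i : S) : Function.Involutive (pf cs i) := by
  rintro ⟨w, ε⟩
  simp only [pf]
  have h1 : s i * (s i * w * s i) * s i = w := by
    simp [← mul_assoc, cs.simple_mul_simple_self]
  by_cases h : w = s i
  · subst h
    simp [cs.simple_mul_simple_self, cs.simple_mul_simple_cancel_left]
  · have h2 : ¬ (s i * w * s i = s i) := by
      intro hc
      apply h
      have := congrArg (fun x => s i * x * s i) hc
      simpa [mul_assoc, cs.simple_mul_simple_cancel_left,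
        cs.simple_mul_simple_cancel_right] using this
    simp [h, h2, h1]

/-- The sign permutation attached to a simple index. -/
noncomputable def sigma (i : S) : Equiv.Perm (W × ℤˣ) :=
  (pf_invol cs i).toPerm

lemma sigma_apply (i : S) (w : W) (ε : ℤˣ) :
    sigma cs i (w, ε) = (s i * w * s i, if w = s i then -ε else ε) := rfl

lemma sigma_pair_pow (i j : S) (n : ℕ) (w : W) (ε : ℤˣ) :
    ((sigma cs i * sigma cs j) ^ n) (w, ε) =
      ((s i * s j) ^ n * w * ((s i * s j) ^ n)⁻¹,
        ε * ∏ k ∈ Finset.range n,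
          ((if (s i * s j) ^ k * w * ((s i * s j) ^ k)⁻¹ = s j then (-1 : ℤˣ) else 1) *
           (if (s i * s j) ^ k * w * ((s i * s j) ^ k)⁻¹ = s j * s i * s j then (-1 : ℤˣ) else 1))) := by
  induction n with
  | zero => simp
  | succ n ih =>
    rw [pow_succ', Equiv.Perm.mul_apply, ih]
    rw [Equiv.Perm.mul_apply, sigma_apply, sigma_apply]
    have hc : ∀ u : W, (s j * u * s j = s i) ↔ (u = s j * s i * s j) := by
      intro u
      constructor
      · intro h
        have := congrArg (fun x => s j * x * s j) h
        simpa [mul_assoc, cs.simple_mul_simple_cancel_left,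
          cs.simple_mul_simple_cancel_right] using this
      · rintro rfl
        simp [mul_assoc, cs.simple_mul_simple_cancel_left]
    simp only [hc, Prod.mk.injEq]
    constructor
    · simp [pow_succ', mul_assoc, mul_inv_rev, cs.inv_simple]
    · rw [Finset.prod_range_succ]
      split_ifs <;> simp [mul_comm, mul_left_comm, mul_assoc]

theorem isLiftable : M.IsLiftable (sigma cs) := by
  intro i j
  set q := s j * s i with hq
  have hqm : q ^ M i j = 1 := cs.simple_mul_simple_pow' i j
  have hp : (s i * s j)⁻¹ = q := by
    rw [hq, mul_inv_rev, cs.inv_simple, cs.inv_simple]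
  have hpk : ∀ k : ℕ, ((s i * s j) ^ k)⁻¹ = q ^ k := by
    intro k; rw [← inv_pow, hp]
  have hkey : s j * q⁻¹ = q * s j := by
    rw [hq, mul_inv_rev, cs.inv_simple, cs.inv_simple, ← mul_assoc]
  have hqc : ∀ k : ℕ, q ^ k * s j * (q ^ k)⁻¹ = q ^ (2 * k) * s j := by
    intro k
    induction k with
    | zero => simp
    | succ k ih =>
      have h1 : q ^ (k+1) * s j * (q ^ (k+1))⁻¹ = q * (q ^ k * s j * (q ^ k)⁻¹) * q⁻¹ := by
        group
      rw [h1, ih, show q * (q ^ (2*k) * s j) * q⁻¹ = q ^ (2*k+1) * (s j * q⁻¹) by group,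
        hkey, ← mul_assoc, ← pow_succ, show 2*k+1+1 = 2*(k+1) by omega]
  have hqc2 : ∀ k : ℕ, q ^ k * (s j * s i * s j) * (q ^ k)⁻¹ = q ^ (2 * k + 1) * s j := by
    intro k
    have h2 : s j * s i * s j = q * s j := by rw [hq]
    rw [h2, show q ^ k * (q * s j) * (q ^ k)⁻¹ = q * (q ^ k * s j * (q ^ k)⁻¹) by group,
      hqc k, ← mul_assoc, ← pow_succ']
  have conj_iff : ∀ (a x c : W), (a * x * a⁻¹ = c) ↔ (x = a⁻¹ * c * a) := by
    intro a x c
    constructor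
    · intro h; rw [← h]; group
    · intro h; rw [h]; group
  have hQ : ∀ k : ℕ, (s i * s j) ^ k = (q ^ k)⁻¹ := by
    intro k; rw [← hpk k, inv_inv]
  have cond1 : ∀ (k : ℕ) (w : W),
      ((s i * s j) ^ k * w * ((s i * s j) ^ k)⁻¹ = s j) ↔ (w = q ^ (2 * k) * s j) := by
    intro k w; rw [conj_iff, hpk k, hQ k, hqc k]
  have cond2 : ∀ (k : ℕ) (w : W),
      ((s i * s j) ^ k * w * ((s i * s j) ^ k)⁻¹ = s j * s i * s j) ↔
        (w = q ^ (2 * k + 1) * s j) := by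
    intro k w; rw [conj_iff, hpk k, hQ k, hqc2 k]
  apply Equiv.ext
  rintro ⟨w, ε⟩
  rw [sigma_pair_pow]
  have hsm : (s i * s j) ^ M i j = 1 := cs.simple_mul_simple_pow i j
  simp only [cond1, cond2, hsm, one_mul, inv_one, mul_one, Equiv.Perm.one_apply]
  set g : ℕ → ℤˣ := fun l => if w = q ^ l * s j then -1 else 1 with hg
  have pairing : ∀ n : ℕ, (∏ k ∈ Finset.range n, (g (2 * k) * g (2 * k + 1)))
      = ∏ l ∈ Finset.range (2 * n), g l := by
    intro n
    induction n with
    | zero => simp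
    | succ n ih =>
      rw [Finset.prod_range_succ, ih, Nat.mul_succ, Finset.prod_range_succ,
        Finset.prod_range_succ, mul_assoc]
  have hprod : (∏ k ∈ Finset.range (M i j), ((if w = q ^ (2*k) * s j then (-1:ℤˣ) else 1)
      * (if w = q ^ (2*k+1) * s j then (-1:ℤˣ) else 1))) = 1 := by
    rw [show (∏ k ∈ Finset.range (M i j), ((if w = q ^ (2*k) * s j then (-1:ℤˣ) else 1)
      * (if w = q ^ (2*k+1) * s j then (-1:ℤˣ) else 1)))
      = ∏ k ∈ Finset.range (M i j), (g (2*k) * g (2*k+1)) from rfl]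
    rw [pairing, two_mul, Finset.prod_range_add]
    have hgp : ∀ l, g (M i j + l) = g l := by
      intro l
      simp only [hg, pow_add, hqm, one_mul]
    simp only [hgp]
    rw [← sq, Int.units_sq]
  rw [hprod, mul_one]

/-- The sign representation on `W × ℤˣ`. -/
noncomputable def phi : W →* Equiv.Perm (W × ℤˣ) :=
  CoxeterSystem.lift cs ⟨sigma cs, isLiftable cs⟩

lemma phi_simple (i : S) : phi cs (s i) = sigma cs i :=
  cs.lift_apply_simple (isLiftable cs) i

lemma lis_cons (i : S) (ω : List S) :
    lis (i :: ω) = s i :: List.map (MulAut.conj (s i)) (lis ω) := rfl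

lemma conj_simple_self (i : S) (w : W) : (MulAut.conj (s i)) (s i * w * s i) = w := by
  simp [MulAut.conj_apply, cs.inv_simple, mul_assoc, cs.simple_mul_simple_cancel_left]

lemma phi_wordProd (ω : List S) (w : W) (ε : ℤˣ) :
    phi cs (π ω)⁻¹ (w, ε) =
      ((π ω)⁻¹ * w * (π ω), (-1 : ℤˣ) ^ (List.count w (lis ω)) * ε) := by
  induction ω generalizing w ε with
  | nil => simp
  | cons i ω ih =>
    have h1 : (π (i :: ω))⁻¹ = (π ω)⁻¹ * s i := by
      rw [cs.wordProd_cons, mul_inv_rev, cs.inv_simple]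
    rw [h1, map_mul, Equiv.Perm.mul_apply, phi_simple, sigma_apply, ih]
    rw [lis_cons]
    have h2 : List.count w (s i :: List.map (⇑(MulAut.conj (s i))) (lis ω))
        = List.count (s i * w * s i) (lis ω) + if w = s i then 1 else 0 := by
      rw [List.count_cons]
      congr 1
      · have h3 : w = (MulAut.conj (s i)) (s i * w * s i) := (conj_simple_self cs i w).symm
        nth_rewrite 1 [h3]
        exact List.count_map_of_injective _ _ (MulAut.conj (s i)).injective _
      · by_cases h : w = s i
        · subst h; simp
        · simp [beq_iff_eq, h, Ne.symm h]
    rw [h2]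
    have h4 : (π (i :: ω)) = s i * π ω := cs.wordProd_cons i ω
    simp only [Prod.mk.injEq]
    refine ⟨by rw [h4]; group, ?_⟩
    by_cases h : w = s i <;>
      simp [h, pow_succ, pow_add, mul_comm, mul_left_comm, mul_assoc]

lemma count_parity (ω ω' : List S) (h : π ω = π ω') (t : W) :
    (-1 : ℤˣ) ^ (List.count t (lis ω)) = (-1 : ℤˣ) ^ (List.count t (lis ω')) := by
  have h1 := phi_wordProd cs ω t 1
  have h2 := phi_wordProd cs ω' t 1
  rw [h] at h1
  rw [h1] at h2
  simpa using congrArg Prod.snd h2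

lemma lis_append (ω₁ ω₂ : List S) :
    lis (ω₁ ++ ω₂) = lis ω₁ ++ List.map (MulAut.conj (π ω₁)) (lis ω₂) := by
  induction ω₁ with
  | nil => simp [MulAut.conj_apply]
  | cons i ω₁ ih =>
    rw [List.cons_append, lis_cons, lis_cons, ih, List.map_append, List.map_map,
      cs.wordProd_cons, List.cons_append]
    congr 2
    apply List.map_congr_left
    intro x _
    simp [MulAut.conj_apply, mul_assoc]

lemma lis_eq_map_ris (ω : List S) :
    lis ω = List.map (MulAut.conj (π ω)) (ris ω) := by
  induction ω with
  | nil => simp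
  | cons i ω ih =>
    rw [lis_cons, ih, cs.wordProd_cons]
    show _ = List.map (MulAut.conj (s i * π ω)) ((π ω)⁻¹ * s i * π ω :: ris ω)
    rw [List.map_cons]
    congr 1
    · simp [MulAut.conj_apply, mul_assoc, cs.inv_simple, cs.simple_mul_simple_cancel_left]
    · rw [List.map_map]
      apply List.map_congr_left
      intro x _
      simp [MulAut.conj_apply, mul_assoc]

lemma eta_refl (t : W) (ht : cs.IsReflection t) :
    ∃ ω : List S, π ω = t ∧ Odd (List.count t (lis ω)) := by
  obtain ⟨x, jj, rfl⟩ := ht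
  obtain ⟨α, rfl⟩ := cs.wordProd_surjective x
  refine ⟨α ++ jj :: α.reverse, ?_, ?_⟩
  · rw [cs.wordProd_append, cs.wordProd_cons, cs.wordProd_reverse, mul_assoc]
  · set t := π α * s jj * (π α)⁻¹ with hT
    rw [lis_append, List.count_append, lis_cons, List.map_cons, List.count_cons]
    have hmid : (MulAut.conj (π α)) (s jj) = t := by simp [MulAut.conj_apply, hT]
    rw [List.map_map]
    have hcomp : (⇑(MulAut.conj (π α))) ∘ (⇑(MulAut.conj (s jj)))
        = ⇑(MulAut.conj (π α * s jj)) := by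
      funext x; simp [MulAut.conj_apply, mul_assoc]
    rw [hcomp]
    have hc3 : List.count t (List.map (⇑(MulAut.conj (π α * s jj))) (lis α.reverse))
        = List.count (s jj) (lis α.reverse) := by
      have h3 : t = (MulAut.conj (π α * s jj)) (s jj) := by
        rw [hT, MulAut.conj_apply, mul_inv_rev, cs.inv_simple]
        rw [mul_assoc (π α * s jj), cs.simple_mul_simple_cancel_left]
      nth_rewrite 1 [h3]
      exact List.count_map_of_injective _ _ (MulAut.conj (π α * s jj)).injective _
    rw [hc3, cs.leftInvSeq_reverse, List.count_reverse]
    have hc1 : List.count t (lis α) = List.count (s jj) (ris α) := by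
      rw [lis_eq_map_ris]
      have h4 : t = (MulAut.conj (π α)) (s jj) := by simp [MulAut.conj_apply, hT]
      nth_rewrite 1 [h4]
      exact List.count_map_of_injective _ _ (MulAut.conj (π α)).injective _
    rw [hc1, hmid]
    simp only [beq_self_eq_true, if_true]
    exact ⟨List.count (s jj) (ris α), by omega⟩

lemma exchange_erase (ω : List S) (t : W) (ht : t ∈ lis ω) :
    ∃ k, k < ω.length ∧ t * π ω = π (ω.eraseIdx k) := by
  obtain ⟨k, hk, hkt⟩ := List.mem_iff_getElem.mp ht
  rw [cs.length_leftInvSeq] at hk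
  refine ⟨k, hk, ?_⟩
  have := cs.getD_leftInvSeq_mul_wordProd ω k
  rwa [List.getD_eq_getElem _ _ (by rwa [cs.length_leftInvSeq]), hkt] at this

lemma odd_count_of_isLeftInversion (ω : List S) (t : W) (hr : cs.IsReflection t)
    (hl : ℓ (t * π ω) < ℓ (π ω)) : Odd (List.count t (lis ω)) := by
  obtain ⟨ωt, hωt, hodd⟩ := eta_refl cs t hr
  obtain ⟨ω₁, hred, heq⟩ := cs.exists_reduced_word' (t * π ω)
  have hπ : π (ωt ++ ω₁) = π ω := by
    rw [cs.wordProd_append, hωt, ← heq, ← mul_assoc, hr.mul_self, one_mul]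
  have hpar := count_parity cs ω (ωt ++ ω₁) hπ.symm t
  have hc : List.count t (lis (ωt ++ ω₁))
      = List.count t (lis ωt) + List.count t (lis ω₁) := by
    rw [lis_append, List.count_append]
    congr 1
    have h4 : t = (MulAut.conj (π ωt)) t := by
      rw [hωt, MulAut.conj_apply, hr.mul_self, one_mul, hr.inv]
    nth_rewrite 1 [h4]
    exact List.count_map_of_injective _ _ (MulAut.conj (π ωt)).injective _
  have heven : ¬ Odd (List.count t (lis ω₁)) := by
    intro hoddc
    have hmem : t ∈ lis ω₁ := List.count_pos_iff.mp (by
      rcases hoddc with ⟨m, hm⟩; omega)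
    obtain ⟨k, hk, hkeq⟩ := exchange_erase cs ω₁ t hmem
    have : ℓ (t * π ω₁) ≤ (ω₁.eraseIdx k).length := hkeq ▸ cs.length_wordProd_le _
    have hlen := List.length_eraseIdx_add_one hk
    have h5 : t * π ω₁ = π ω := by rw [← heq, ← mul_assoc, hr.mul_self, one_mul]
    rw [h5] at this
    have h6 : ℓ (π ω₁) = ω₁.length := hred
    rw [← heq] at h6
    omega
  have : Odd (List.count t (lis (ωt ++ ω₁))) := by
    rw [hc]
    rcases hodd with ⟨m, hm⟩
    rcases Nat.even_or_odd (List.count t (lis ω₁)) with he | ho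
    · rcases he with ⟨m', hm'⟩; exact ⟨m + m', by omega⟩
    · exact absurd ho heven
  -- transfer parity back to ω
  by_contra hcon
  have heva : Even (List.count t (lis ω)) := Nat.not_odd_iff_even.mp hcon
  rw [heva.neg_one_pow, this.neg_one_pow] at hpar
  exact absurd hpar (by decide)

theorem strong_exchange (ω : List S) (t : W) (hr : cs.IsReflection t)
    (hl : ℓ (t * π ω) < ℓ (π ω)) : t ∈ lis ω := by
  have := odd_count_of_isLeftInversion cs ω t hr hl
  rcases this with ⟨m, hm⟩
  exact List.count_pos_iff.mp (by omega)

lemma reduce_word_aux : ∀ (n : ℕ) (ω : List S), ω.length ≤ n →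
    ∃ ω', ω'.Sublist ω ∧ π ω' = π ω ∧ cs.IsReduced ω' := by
  intro n
  induction n with
  | zero =>
    intro ω hω
    rw [Nat.le_zero, List.length_eq_zero_iff] at hω
    subst hω
    exact ⟨[], List.Sublist.refl _, rfl, by simp [CoxeterSystem.IsReduced]⟩
  | succ n ihn =>
    intro ω hω
    by_cases hred : cs.IsReduced ω
    · exact ⟨ω, List.Sublist.refl _, rfl, hred⟩
    · have hne : ω ≠ [] := by
        rintro rfl
        exact hred (by simp [CoxeterSystem.IsReduced])
      have hlen1 : 1 ≤ ω.length := by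
        cases ω with
        | nil => exact absurd rfl hne
        | cons a l => simp
      have hex : ∃ j, ¬ cs.IsReduced (ω.take (j+1)) := by
        refine ⟨ω.length - 1, ?_⟩
        rw [show ω.length - 1 + 1 = ω.length by omega, List.take_length]
        exact hred
      classical
      let j := Nat.find hex
      have hj : ¬ cs.IsReduced (ω.take (j+1)) := Nat.find_spec hex
      have hjle : j ≤ ω.length - 1 := Nat.find_min' hex (by
        rw [show ω.length - 1 + 1 = ω.length by omega, List.take_length]
        exact hred)
      have hjlt : j < ω.length := by omega
      have hredj : cs.IsReduced (ω.take j) := by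
        rcases Nat.eq_zero_or_pos j with h0 | h0
        · rw [h0]; simp [CoxeterSystem.IsReduced]
        · have := Nat.find_min hex (show j - 1 < j by omega)
          rw [show j - 1 + 1 = j by omega] at this
          exact not_not.mp this
      set a := ω.get ⟨j, hjlt⟩ with ha
      have htake : ω.take (j+1) = ω.take j ++ [a] := by
        rw [ha, ← List.concat_eq_append]
        exact (List.take_concat_get hjlt).symm
      have hπtake : π (ω.take (j+1)) = π (ω.take j) * s a := by
        rw [htake, cs.wordProd_append, cs.wordProd_singleton]
      have hlentake : (ω.take j).length = j := by
        rw [List.length_take]; omega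
      have hℓj : ℓ (π (ω.take j)) = j := by
        have := hredj
        rwa [CoxeterSystem.IsReduced, hlentake] at this
      have hℓ1 : ℓ (π (ω.take j) * s a) < j := by
        rcases cs.length_mul_simple (π (ω.take j)) a with h | h
        · exfalso
          apply hj
          rw [CoxeterSystem.IsReduced, hπtake, h, hℓj, htake]
          simp [hlentake]
        · omega
      set t : W := π (ω.take j) * s a * (π (ω.take j))⁻¹ with hT
      have hrefl : cs.IsReflection t := ⟨π (ω.take j), a, rfl⟩
      have htmul : t * π (ω.take j) = π (ω.take j) * s a := by rw [hT]; group
      have hlt : ℓ (t * π (ω.take j)) < ℓ (π (ω.take j)) := by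
        rw [htmul, hℓj]; exact hℓ1
      have hmem := strong_exchange cs (ω.take j) t hrefl hlt
      obtain ⟨k, hk, hkeq⟩ := exchange_erase cs (ω.take j) t hmem
      rw [htmul] at hkeq
      set ω'' := (ω.take j).eraseIdx k ++ ω.drop (j+1) with hω''
      have hπ'' : π ω'' = π ω := by
        rw [hω'', cs.wordProd_append, ← hkeq, ← hπtake, ← cs.wordProd_append]
        rw [List.take_append_drop]
      have hsub'' : ω''.Sublist ω := by
        have h1 : ((ω.take j).eraseIdx k).Sublist (ω.take j) := List.eraseIdx_sublist _ _
        have h2 : ω''.Sublist (ω.take j ++ ω.drop (j+1)) :=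
          List.Sublist.append h1 (List.Sublist.refl _)
        have h3 : (ω.take j ++ ω.drop (j+1)) = ω.eraseIdx j :=
          (List.eraseIdx_eq_take_drop_succ ω j).symm
        rw [h3] at h2
        exact h2.trans (List.eraseIdx_sublist ω j)
      have hlen'' : ω''.length ≤ n := by
        have h4 : ((ω.take j).eraseIdx k).length + 1 = (ω.take j).length :=
          List.length_eraseIdx_add_one (by simpa [hlentake] using hk)
        have h5 : (ω.drop (j+1)).length = ω.length - (j+1) := List.length_drop
        rw [hω'', List.length_append]
        omega
      obtain ⟨ω', hsub', hπ', hred'⟩ := ihn ω'' hlen''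
      exact ⟨ω', hsub'.trans hsub'', by rw [hπ', hπ''], hred'⟩

lemma reduce_word (ω : List S) :
    ∃ ω', ω'.Sublist ω ∧ π ω' = π ω ∧ cs.IsReduced ω' :=
  reduce_word_aux cs ω.length ω le_rfl

variable (I : Set S)

lemma simple_mem_WP {i : S} (hi : i ∈ I) : s i ∈ WP cs I :=
  Subgroup.subset_closure ⟨i, hi, rfl⟩

lemma mem_WP_iff (w : W) :
    w ∈ WP cs I ↔ ∃ ω : List S, (∀ a ∈ ω, a ∈ I) ∧ w = π ω := by
  constructor
  · intro hw
    induction hw using Subgroup.closure_induction with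
    | mem x hx =>
      obtain ⟨i, hi, rfl⟩ := hx
      exact ⟨[i], by simpa using hi, (cs.wordProd_singleton i).symm⟩
    | one => exact ⟨[], by simp, by simp⟩
    | mul x y _ _ hx hy =>
      obtain ⟨ω₁, h₁, rfl⟩ := hx
      obtain ⟨ω₂, h₂, rfl⟩ := hy
      refine ⟨ω₁ ++ ω₂, ?_, (cs.wordProd_append ω₁ ω₂).symm⟩
      intro a haa
      rcases List.mem_append.mp haa with h | h
      · exact h₁ a h
      · exact h₂ a h
    | inv x _ hx =>
      obtain ⟨ω₁, h₁, rfl⟩ := hx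
      exact ⟨ω₁.reverse, fun a haa => h₁ a (List.mem_reverse.mp haa),
        (cs.wordProd_reverse ω₁).symm⟩
  · rintro ⟨ω, hω, rfl⟩
    induction ω with
    | nil => simp [Subgroup.one_mem]
    | cons i ω ih =>
      rw [cs.wordProd_cons]
      exact Subgroup.mul_mem _ (simple_mem_WP cs I (hω i (by simp)))
        (ih (fun a haa => hω a (List.mem_cons_of_mem _ haa)))

lemma exists_reduced_word_WP {w : W} (hw : w ∈ WP cs I) :
    ∃ ω : List S, (∀ a ∈ ω, a ∈ I) ∧ cs.IsReduced ω ∧ w = π ω := by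
  obtain ⟨ω, hω, rfl⟩ := (mem_WP_iff cs I w).mp hw
  obtain ⟨ω', hsub, hπ, hred⟩ := reduce_word cs ω
  exact ⟨ω', fun a haa => hω a (hsub.subset haa), hred, hπ.symm⟩

lemma WP_descent {u : W} (hu : u ∈ WP cs I) (hne : u ≠ 1) :
    ∃ i ∈ I, ℓ (s i * u) < ℓ u ∧ s i * u ∈ WP cs I := by
  obtain ⟨ω, hω, hred, rfl⟩ := exists_reduced_word_WP cs I hu
  cases ω with
  | nil => exact absurd (by simp) hne
  | cons i ω' =>
    refine ⟨i, hω i (by simp), ?_, ?_⟩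
    · rw [cs.wordProd_cons, cs.simple_mul_simple_cancel_left]
      have h1 : ℓ (π ω') ≤ ω'.length := cs.length_wordProd_le ω'
      have h2 : ℓ (π (i :: ω')) = ω'.length + 1 := by
        have := hred
        rwa [CoxeterSystem.IsReduced, List.length_cons] at this
      rw [show s i * π ω' = π (i :: ω') from (cs.wordProd_cons i ω').symm]
      omega
    · rw [cs.wordProd_cons, cs.simple_mul_simple_cancel_left]
      exact (mem_WP_iff cs I _).mpr ⟨ω', fun a haa => hω a (List.mem_cons_of_mem _ haa), rfl⟩

lemma tP_spec (w : W) :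
    (∃ u ∈ WP cs I, tP cs I w = u * w) ∧
      ∀ v', (∃ u ∈ WP cs I, v' = u * w) → ℓ (tP cs I w) ≤ ℓ v' := by
  have hn : ∃ n : ℕ, ∃ v : W, (∃ u ∈ WP cs I, v = u * w) ∧ ℓ v = n :=
    ⟨ℓ w, w, ⟨1, Subgroup.one_mem _, (one_mul w).symm⟩, rfl⟩
  have hex : ∃ v : W, (∃ u ∈ WP cs I, v = u * w) ∧
      ∀ v', (∃ u ∈ WP cs I, v' = u * w) → cs.length v ≤ cs.length v' := by
    obtain ⟨v, hv, hlen⟩ := Nat.find_spec hn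
    refine ⟨v, hv, fun v' hv' => ?_⟩
    rw [hlen]
    exact Nat.find_min' hn ⟨v', hv', rfl⟩
  exact Classical.epsilon_spec hex

lemma length_min_mul {w v : W}
    (hmem : ∃ u ∈ WP cs I, v = u * w)
    (hmin : ∀ v', (∃ u ∈ WP cs I, v' = u * w) → ℓ v ≤ ℓ v') :
    ∀ u ∈ WP cs I, ℓ (u * v) = ℓ u + ℓ v := by
  suffices H : ∀ n : ℕ, ∀ u ∈ WP cs I, ℓ u = n → ℓ (u * v) = ℓ u + ℓ v by
    intro u hu; exact H (ℓ u) u hu rfl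
  intro n
  induction n using Nat.strong_induction_on with
  | _ n ih =>
    intro u hu hlu
    by_cases h1 : u = 1
    · simp [h1]
    · obtain ⟨i, hi, hdesc, hmem'⟩ := WP_descent cs I hu h1
      have hlu' : ℓ (s i * u) + 1 = ℓ u := by
        rcases cs.length_simple_mul u i with h | h
        · omega
        · exact h
      have ihe : ℓ ((s i * u) * v) = ℓ (s i * u) + ℓ v :=
        ih (ℓ (s i * u)) (by omega) (s i * u) hmem' rfl
      have hcan : s i * ((s i * u) * v) = u * v := by
        rw [← mul_assoc, cs.simple_mul_simple_cancel_left]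
      rcases cs.length_simple_mul ((s i * u) * v) i with h | h
      · rw [← hcan, h, ihe]; omega
      · exfalso
        obtain ⟨β, hβI, hβred, hβeq⟩ := exists_reduced_word_WP cs I hmem'
        obtain ⟨γ, hγred, hγeq⟩ := cs.exists_reduced_word' v
        have hπβγ : π (β ++ γ) = (s i * u) * v := by
          rw [cs.wordProd_append, ← hβeq, ← hγeq]
        have hredβγ : cs.IsReduced (β ++ γ) := by
          rw [CoxeterSystem.IsReduced, hπβγ, List.length_append, ihe]
          have h2 : β.length = ℓ (s i * u) := by
            rw [hβeq]; exact Eq.symm hβred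
          have h3 : γ.length = ℓ v := by
            rw [hγeq]; exact Eq.symm hγred
          omega
        have hlt : ℓ (s i * π (β ++ γ)) < ℓ (π (β ++ γ)) := by
          rw [hπβγ]; omega
        have hmemlis := strong_exchange cs (β ++ γ) (s i) (cs.isReflection_simple i) hlt
        rw [lis_append, ← hβeq] at hmemlis
        rcases List.mem_append.mp hmemlis with hcase | hcase
        · have h5 := cs.isLeftInversion_of_mem_leftInvSeq hβred hcase
          rw [← hβeq] at h5
          have h6 := h5.2
          rw [cs.simple_mul_simple_cancel_left] at h6
          omega
        · obtain ⟨t0, ht0mem, ht0eq⟩ := List.mem_map.mp hcase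
          have h7 := cs.isLeftInversion_of_mem_leftInvSeq hγred ht0mem
          rw [← hγeq] at h7
          have h8 : ℓ (t0 * v) < ℓ v := h7.2
          have ht0WP : t0 ∈ WP cs I := by
            have h9 : t0 = (s i * u)⁻¹ * s i * (s i * u) := by
              rw [MulAut.conj_apply] at ht0eq
              have h9' := congrArg (fun x => (s i * u)⁻¹ * x * (s i * u)) ht0eq
              rw [← h9']; group
            rw [h9]
            exact Subgroup.mul_mem _ (Subgroup.mul_mem _ (Subgroup.inv_mem _ hmem')
              (simple_mem_WP cs I hi)) hmem'
          obtain ⟨u₀, hu₀, hveq⟩ := hmem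
          have h10 : ℓ v ≤ ℓ (t0 * v) :=
            hmin (t0 * v) ⟨t0 * u₀, Subgroup.mul_mem _ ht0WP hu₀, by rw [hveq]; group⟩
          omega

lemma tP_eq_of_min {w v : W}
    (hmem : ∃ u ∈ WP cs I, v = u * w)
    (hmin : ∀ v', (∃ u ∈ WP cs I, v' = u * w) → ℓ v ≤ ℓ v') :
    tP cs I w = v := by
  obtain ⟨⟨u₁, hu₁, he₁⟩, hmin₁⟩ := tP_spec cs I w
  obtain ⟨u₀, hu₀, hveq⟩ := hmem
  have h2 : tP cs I w = (u₁ * u₀⁻¹) * v := by rw [he₁, hveq]; group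
  have h3 : u₁ * u₀⁻¹ ∈ WP cs I := Subgroup.mul_mem _ hu₁ (Subgroup.inv_mem _ hu₀)
  have h4 : ℓ (tP cs I w) = ℓ (u₁ * u₀⁻¹) + ℓ v := by
    rw [h2]
    exact length_min_mul cs I ⟨u₀, hu₀, hveq⟩ hmin _ h3
  have h5 : ℓ (tP cs I w) ≤ ℓ v := hmin₁ v ⟨u₀, hu₀, hveq⟩
  have h6 : ℓ (u₁ * u₀⁻¹) = 0 := by omega
  rw [cs.length_eq_zero_iff] at h6
  rw [h2, h6, one_mul]

lemma tP_one : tP cs I (1 : W) = 1 := by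
  apply tP_eq_of_min cs I ⟨1, Subgroup.one_mem _, by simp⟩
  intro v' _
  simp

lemma tP_mul_simple_mem (w : W) (j : S)
    (h : ∃ i ∈ I, s i = tP cs I w * s j * (tP cs I w)⁻¹) :
    tP cs I (w * s j) = tP cs I w := by
  obtain ⟨⟨u₀, hu₀, hveq⟩, hmin⟩ := tP_spec cs I w
  obtain ⟨i, hi, hieq⟩ := h
  have hsv : s i * tP cs I w = tP cs I w * s j := by rw [hieq]; group
  have hws : w * s j = (u₀⁻¹ * s i * u₀) * w := by
    have hsv' : s i * (u₀ * w) = (u₀ * w) * s j := by rw [← hveq]; exact hsv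
    rw [mul_assoc, mul_assoc, hsv']; group
  have hu₁ : u₀⁻¹ * s i * u₀ ∈ WP cs I :=
    Subgroup.mul_mem _ (Subgroup.mul_mem _ (Subgroup.inv_mem _ hu₀)
      (simple_mem_WP cs I hi)) hu₀
  apply tP_eq_of_min cs I
  · refine ⟨u₀ * (u₀⁻¹ * s i * u₀)⁻¹, Subgroup.mul_mem _ hu₀ (Subgroup.inv_mem _ hu₁), ?_⟩
    rw [hws, hveq]; group
  · rintro v' ⟨u', hu', rfl⟩
    rw [hws, ← mul_assoc]
    exact hmin _ ⟨u' * (u₀⁻¹ * s i * u₀), Subgroup.mul_mem _ hu' hu₁, rfl⟩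

lemma tP_mul_simple_notmem (w : W) (j : S)
    (h : ¬ ∃ i ∈ I, s i = tP cs I w * s j * (tP cs I w)⁻¹) :
    tP cs I (w * s j) = tP cs I w * s j := by
  obtain ⟨⟨u₀, hu₀, hveq⟩, hmin⟩ := tP_spec cs I w
  obtain ⟨⟨u₄, hu₄, hveq₂⟩, hmin₂⟩ := tP_spec cs I (w * s j)
  set v := tP cs I w with hv
  set v₂ := tP cs I (w * s j) with hv₂
  have hu₅ : u₀ * u₄⁻¹ ∈ WP cs I := Subgroup.mul_mem _ hu₀ (Subgroup.inv_mem _ hu₄)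
  have h5 : v * s j = (u₀ * u₄⁻¹) * v₂ := by
    rw [hveq₂, hveq]; group
  have hadd : ℓ (v * s j) = ℓ (u₀ * u₄⁻¹) + ℓ v₂ := by
    rw [h5]
    exact length_min_mul cs I ⟨u₄, hu₄, hveq₂⟩ hmin₂ _ hu₅
  by_cases h1 : u₀ * u₄⁻¹ = 1
  · rw [h1, one_mul] at h5; rw [← h5]
  · exfalso
    obtain ⟨i, hi, hdesc, hmem'⟩ := WP_descent cs I hu₅ h1
    have hlt : ℓ (s i * (v * s j)) < ℓ (v * s j) := by
      have h6 : s i * (v * s j) = (s i * (u₀ * u₄⁻¹)) * v₂ := by rw [h5]; group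
      rw [h6, length_min_mul cs I ⟨u₄, hu₄, hveq₂⟩ hmin₂ _ hmem', hadd]
      omega
    have hgti : ℓ v < ℓ (s i * v) := by
      have h7 : ℓ v ≤ ℓ (s i * v) :=
        hmin _ ⟨s i * u₀, Subgroup.mul_mem _ (simple_mem_WP cs I hi) hu₀,
          by rw [hveq]; group⟩
      have h8 : ℓ (s i * v) ≠ ℓ v := cs.length_simple_mul_ne v i
      omega
    rcases cs.length_mul_simple v j with hvj | hvj
    · -- ascent case: exchange in the word γ ++ [j]
      obtain ⟨γ, hγred, hγeq⟩ := cs.exists_reduced_word' v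
      have hπγj : π (γ ++ [j]) = v * s j := by
        rw [cs.wordProd_append, cs.wordProd_singleton, ← hγeq]
      have hlt' : ℓ (s i * π (γ ++ [j])) < ℓ (π (γ ++ [j])) := by rw [hπγj]; exact hlt
      have hmemlis := strong_exchange cs (γ ++ [j]) (s i) (cs.isReflection_simple i) hlt'
      rw [lis_append, ← hγeq] at hmemlis
      rcases List.mem_append.mp hmemlis with hcase | hcase
      · have h9 := cs.isLeftInversion_of_mem_leftInvSeq hγred hcase
        rw [← hγeq] at h9
        exact absurd h9.2 (by omega)
      · apply h
        refine ⟨i, hi, ?_⟩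
        obtain ⟨t0, ht0mem, ht0eq⟩ := List.mem_map.mp hcase
        rw [cs.leftInvSeq_singleton, List.mem_singleton] at ht0mem
        subst ht0mem
        rw [← ht0eq, MulAut.conj_apply]
    · -- descent case: impossible
      have h11 : ℓ (s i * v) ≤ ℓ ((s i * v) * s j) + 1 := by
        rcases cs.length_mul_simple (s i * v) j with h | h <;> omega
      rw [mul_assoc] at h11
      omega

lemma prW_append (b₁ b₂ : List (S × Bool)) :
    prW cs (b₁ ++ b₂) = prW cs b₁ * prW cs b₂ := by
  simp [prW, cs.wordProd_append]

lemma retr_aux_eq (b : List (S × Bool)) :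
    ∀ w : W, tP cs I w * prW cs b =
      prW cs (retrAux cs I w b) * tP cs I (w * prW cs b) := by
  induction b with
  | nil =>
    intro w
    simp [prW, retrAux]
  | cons p rest ih =>
    intro w
    have hpr : prW cs (p :: rest) = s p.1 * prW cs rest := by
      simp [prW, cs.wordProd_cons]
    have hre : retrAux cs I w (p :: rest) =
        (if h : ∃ i ∈ I, cs.simple i = tP cs I w * cs.simple p.1 * (tP cs I w)⁻¹ then
          [(h.choose, p.2)] else []) ++ retrAux cs I (w * cs.simple p.1) rest := rfl
    rw [hpr, hre, prW_append]
    by_cases h : ∃ i ∈ I, cs.simple i = tP cs I w * cs.simple p.1 * (tP cs I w)⁻¹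
    · rw [dif_pos h]
      generalize hgen : h.choose = i0
      have hchmem : i0 ∈ I := by rw [← hgen]; exact h.choose_spec.1
      have hcheq : cs.simple i0 = tP cs I w * cs.simple p.1 * (tP cs I w)⁻¹ := by
        rw [← hgen]; exact h.choose_spec.2
      have h2 : tP cs I (w * s p.1) = tP cs I w :=
        tP_mul_simple_mem cs I w p.1 ⟨i0, hchmem, hcheq⟩
      have h3 : prW cs [(i0, p.2)] = s i0 := by simp [prW]
      have h4 : tP cs I w * s p.1 = s i0 * tP cs I w := by rw [hcheq]; group
      calc tP cs I w * (s p.1 * prW cs rest)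
          = (tP cs I w * s p.1) * prW cs rest := by rw [mul_assoc]
        _ = s i0 * (tP cs I w * prW cs rest) := by rw [h4]; group
        _ = s i0 * (tP cs I (w * s p.1) * prW cs rest) := by rw [h2]
        _ = s i0 * (prW cs (retrAux cs I (w * s p.1) rest)
              * tP cs I ((w * s p.1) * prW cs rest)) := by rw [ih (w * s p.1)]
        _ = prW cs [(i0, p.2)] * prW cs (retrAux cs I (w * s p.1) rest)
              * tP cs I (w * (s p.1 * prW cs rest)) := by
            rw [h3, mul_assoc, mul_assoc]
    · rw [dif_neg h]
      have h2 : tP cs I (w * s p.1) = tP cs I w * s p.1 :=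
        tP_mul_simple_notmem cs I w p.1 h
      calc tP cs I w * (s p.1 * prW cs rest)
          = (tP cs I w * s p.1) * prW cs rest := by rw [mul_assoc]
        _ = tP cs I (w * s p.1) * prW cs rest := by rw [h2]
        _ = prW cs (retrAux cs I (w * s p.1) rest)
              * tP cs I ((w * s p.1) * prW cs rest) := ih (w * s p.1)
        _ = prW cs [] * prW cs (retrAux cs I (w * s p.1) rest)
              * tP cs I (w * (s p.1 * prW cs rest)) := by
            simp [prW, mul_assoc]

end Aux


/-- For every `I ⊆ S` and every word `b` on `S`,
`pr(b) = pr(π̂_I(b)) · t_I(pr(b))` in `W`. -/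
theorem pr_retr (cs : CoxeterSystem M W) (I : Set S) (b : List (S × Bool)) :
    prW cs b = prW cs (retr cs I b) * tP cs I (prW cs b) := by
  have h := Aux.retr_aux_eq cs I b 1
  rw [Aux.tP_one cs I, one_mul] at h
  exact h

end DGM
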